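/- Let G be a simply sm-factorizable topological group. If a subgroup H of G (with the subspace topology) is z-embedded in G, then H is simply sm-factorizable. -/

import Mathlib

open Topology TopologicalSpace Pointwise Function Set

def IsCozero {X : Type*} [TopologicalSpace X] (U : Set X) : Prop :=
  ∃ f : X → ℝ, Continuous f ∧ U = f ⁻¹' {x : ℝ | x ≠ 0}

/-- A topological group is simply sm-factorizable if every cozero set is saturated with
respect to some continuous surjective homomorphism onto a separable metrizable topological group. -/
def SimplySMFactorizable (G : Type*) [Group G] [TopologicalSpace G] : Prop :=
  ∀ U : Set G, IsCozero U →
    ∃ (H : Type) (gH : Group H) (tH : TopologicalSpace H),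
      letI := gH
      letI := tH
      IsTopologicalGroup H ∧ SeparableSpace H ∧ MetrizableSpace H ∧
        ∃ π : G →* H, Continuous π ∧ Surjective π ∧ ⇑π ⁻¹' (⇑π '' U) = U

/-- A z-embedded subgroup of a simply sm-factorizable topological group is simply
sm-factorizable. -/
theorem statement7 (G : Type*) [Group G] [TopologicalSpace G] [IsTopologicalGroup G]
    (hG : SimplySMFactorizable G) (H : Subgroup G)
    (hz : ∀ U : Set H, IsCozero U →
      ∃ V : Set G, IsCozero V ∧ U = (Subtype.val : H → G) ⁻¹' V) :
    SimplySMFactorizable H := by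
  intro U hU
  obtain ⟨V, hVcoz, hUV⟩ := hz U hU
  obtain ⟨K, gK, tK, hTG, hSep, hMet, π, hπc, hπs, hπsat⟩ := hG V hVcoz
  letI := gK; letI := tK
  haveI := hTG; haveI := hSep; haveI := hMet
  -- second countability of K
  letI : MetricSpace K := TopologicalSpace.metrizableSpaceMetric K
  haveI : SecondCountableTopology K := UniformSpace.secondCountable_of_separable K
  set φ : ↥H →* K := π.comp H.subtype with hφ
  refine ⟨↥φ.range, inferInstance, inferInstance, inferInstance, ?_, ?_,
    φ.rangeRestrict, ?_, φ.rangeRestrict_surjective, ?_⟩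
  · exact inferInstance
  · exact inferInstance
  · exact Continuous.subtype_mk (hπc.comp continuous_subtype_val) _
  · ext h
    simp only [Set.mem_preimage, Set.mem_image]
    constructor
    · rintro ⟨u, huU, hval⟩
      have hπeq : π u.val = π h.val := congrArg Subtype.val hval
      have hu : (u : G) ∈ V := by rw [hUV] at huU; exact huU
      have : (h : G) ∈ ⇑π ⁻¹' (⇑π '' V) := ⟨u, hu, hπeq⟩
      rw [hπsat] at this
      rw [hUV]
      exact this
    · intro hh
      exact ⟨h, hh, rfl⟩
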